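/- Let K₀, K₁ be disjoint ideals of a Boolean algebra B generating a maximal ideal K = {a₀ ∪ a₁ : a₀ ∈ K₀, a₁ ∈ K₁}, and suppose neither K₀ nor K₁ has a maximal element. If c ∈ B is disjoint from every member of K_{1−ℓ}, then c ∈ K_ℓ. -/
import Mathlib


variable {B : Type*} [BooleanAlgebra B]

def IsIdeal (K : Set B) : Prop :=
  ⊥ ∈ K ∧ (∀ a b : B, b ∈ K → a ≤ b → a ∈ K) ∧ (∀ a ∈ K, ∀ b ∈ K, a ⊔ b ∈ K)

/-- If `K₀, K₁` are disjoint ideals with no maximal elements generating a proper maximal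
ideal `K = {a₀ ⊔ a₁}`, and `c` is disjoint from every member of `K_{1−ℓ}`, then `c ∈ K_ℓ`. -/
theorem mem_of_disjoint_from_other_ideal (K : Bool → Set B)
    (hK : ∀ ℓ, IsIdeal (K ℓ))
    (hdisj : ∀ z : B, z ∈ K true → z ∈ K false → z = ⊥)
    (hnomax : ∀ ℓ, ∀ a ∈ K ℓ, ∃ b ∈ K ℓ, a < b)
    (hproper : ¬ ∃ a ∈ K false, ∃ b ∈ K true, a ⊔ b = ⊤)
    (hmax : ∀ z : B, (∃ a ∈ K false, ∃ b ∈ K true, z = a ⊔ b) ∨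
      (∃ a ∈ K false, ∃ b ∈ K true, zᶜ = a ⊔ b))
    (ℓ : Bool) (c : B) (hc : ∀ d ∈ K (!ℓ), c ⊓ d = ⊥) :
    c ∈ K ℓ := by
  rcases hmax c with ⟨a, ha, b, hb, hab⟩ | ⟨a, ha, b, hb, hab⟩
  · cases ℓ with
    | false =>
      have hb0 : b = ⊥ := by
        have h1 := hc b hb
        have hble : b ≤ c := hab ▸ le_sup_right
        calc b = c ⊓ b := (inf_eq_right.mpr hble).symm
        _ = ⊥ := h1
      rw [hab, hb0, sup_bot_eq]; exact ha
    | true =>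
      have ha0 : a = ⊥ := by
        have h1 := hc a ha
        have hale : a ≤ c := hab ▸ le_sup_left
        calc a = c ⊓ a := (inf_eq_right.mpr hale).symm
        _ = ⊥ := h1
      rw [hab, ha0, bot_sup_eq]; exact hb
  · exfalso
    cases ℓ with
    | false =>
      obtain ⟨e, he, hbe⟩ := hnomax true b hb
      have hdle : e ≤ a ⊔ b := by
        have h1 := hc e he
        have h2 : e ≤ cᶜ := le_compl_iff_disjoint_left.mpr (disjoint_iff.mpr h1)
        rwa [hab] at h2
      have hea : e ⊓ a = ⊥ :=
        hdisj _ ((hK true).2.1 _ _ he inf_le_left) ((hK false).2.1 _ _ ha inf_le_right)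
      have heb : e ≤ b := by
        calc e = e ⊓ (a ⊔ b) := (inf_eq_left.mpr hdle).symm
        _ = e ⊓ a ⊔ e ⊓ b := inf_sup_left e a b
        _ = e ⊓ b := by rw [hea, bot_sup_eq]
        _ ≤ b := inf_le_right
      exact hbe.not_ge heb
    | true =>
      obtain ⟨e, he, hae⟩ := hnomax false a ha
      have hdle : e ≤ a ⊔ b := by
        have h1 := hc e he
        have h2 : e ≤ cᶜ := le_compl_iff_disjoint_left.mpr (disjoint_iff.mpr h1)
        rwa [hab] at h2
      have heb : e ⊓ b = ⊥ :=
        hdisj _ ((hK true).2.1 _ _ hb inf_le_right) ((hK false).2.1 _ _ he inf_le_left)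
      have hea : e ≤ a := by
        calc e = e ⊓ (a ⊔ b) := (inf_eq_left.mpr hdle).symm
        _ = e ⊓ a ⊔ e ⊓ b := inf_sup_left e a b
        _ = e ⊓ a := by rw [heb, sup_bot_eq]
        _ ≤ a := inf_le_right
      exact hae.not_ge hea
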